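/- arXiv:1910.12623 — 2 statements merged into one kernel-verified Lean document; each statement's English description precedes it below -/
import Mathlib

section
/- Let $G>0$, $H\geq 0$, $l\in(0,1)$ be real numbers and $d\geq 2$ an integer. Then for every choice of real numbers $a_0,\dots,a_d$ satisfying $\max\{-Gl/4, -G^2/(4H(d-1))\} < a_0 \leq 0$ (interpreting $G^2/(4H(d-1))$ as $+\infty$ when $H=0$), $a_1\geq G$, and $|a_i|\leq H$ for all $i\geq 2$, the polynomial $p(t)=\sum_{i=0}^d a_i t^i$ takes a strictly positive value at some point of the open interval $(0, l/2)$. -/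
/-- **Numerical lemma** (Lemma `thm:Numerical lemma`).
Let `G > 0`, `H ≥ 0`, `l ∈ (0,1)` be real numbers and `d ≥ 2` an integer.  For every
choice of real numbers `a 0, …, a d` satisfying
`max {-G*l/4, -G^2/(4*H*(d-1))} < a 0 ≤ 0` (the second bound being `-∞` when `H = 0`),
`a 1 ≥ G`, and `|a i| ≤ H` for all `2 ≤ i ≤ d`, the polynomial `p t = ∑ a i * t ^ i`
takes a strictly positive value at some point of the open interval `(0, l/2)`. -/
theorem numerical_lemma (G H l : ℝ) (hG : 0 < G) (hH : 0 ≤ H) (hl : l ∈ Set.Ioo (0:ℝ) 1)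
    (d : ℕ) (hd : 2 ≤ d) (a : ℕ → ℝ)
    (ha0_le : a 0 ≤ 0)
    (ha0_gt₁ : -(G * l / 4) < a 0)
    (ha0_gt₂ : H ≠ 0 → -(G ^ 2 / (4 * H * (d - 1))) < a 0)
    (ha1 : G ≤ a 1)
    (hai : ∀ i, 2 ≤ i → i ≤ d → |a i| ≤ H) :
    ∃ t ∈ Set.Ioo (0 : ℝ) (l / 2), 0 < ∑ i ∈ Finset.range (d + 1), a i * t ^ i := by
  obtain ⟨hl0, hl1⟩ := hl
  have hd1 : (1:ℝ) ≤ (d:ℝ) - 1 := by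
    have : (2:ℝ) ≤ (d:ℝ) := by exact_mod_cast hd
    linarith
  set K : ℝ := H * ((d:ℝ) - 1) with hKdef
  have hK0 : 0 ≤ K := mul_nonneg hH (by linarith)
  -- key lower bound for p(t)
  have key : ∀ t : ℝ, 0 < t → t ≤ 1 →
      a 0 + G * t - K * t ^ 2 ≤ ∑ i ∈ Finset.range (d + 1), a i * t ^ i := by
    intro t ht0 ht1
    have hsplit : ∑ i ∈ Finset.range (d + 1), a i * t ^ i
        = (a 0 + a 1 * t) + ∑ i ∈ Finset.Ico 2 (d + 1), a i * t ^ i := by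
      rw [Finset.range_eq_Ico,
        ← Finset.sum_Ico_consecutive _ (by norm_num : (0:ℕ) ≤ 2) (by omega : 2 ≤ d + 1)]
      congr 1
      rw [show Finset.Ico 0 2 = Finset.range 2 from (Finset.range_eq_Ico 2).symm]
      simp [Finset.sum_range_succ]
    have htail : ((d:ℝ) - 1) * (-(H * t ^ 2)) ≤ ∑ i ∈ Finset.Ico 2 (d + 1), a i * t ^ i := by
      have hbound : ∀ i ∈ Finset.Ico 2 (d + 1), -(H * t ^ 2) ≤ a i * t ^ i := by
        intro i hi
        obtain ⟨hi2, hid⟩ := Finset.mem_Ico.mp hi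
        have hiH : -H ≤ a i := (abs_le.mp (hai i hi2 (by omega))).1
        have hti : t ^ i ≤ t ^ 2 := pow_le_pow_of_le_one ht0.le ht1 hi2
        have htin : 0 ≤ t ^ i := pow_nonneg ht0.le i
        nlinarith [mul_le_mul_of_nonneg_left hti hH, mul_le_mul_of_nonneg_right hiH htin]
      have := Finset.card_nsmul_le_sum (Finset.Ico 2 (d + 1)) (fun i => a i * t ^ i)
        (-(H * t ^ 2)) hbound
      have hcard : (Finset.Ico 2 (d + 1)).card = d - 1 := by
        rw [Nat.card_Ico]; omega
      rw [hcard, nsmul_eq_mul] at this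
      have hcast : ((d - 1 : ℕ) : ℝ) = (d:ℝ) - 1 := by
        push_cast [Nat.cast_sub (by omega : 1 ≤ d)]
        ring
      rw [hcast] at this
      exact this
    have ha1t : G * t ≤ a 1 * t := mul_le_mul_of_nonneg_right ha1 ht0.le
    rw [hsplit]
    have : K * t ^ 2 = ((d:ℝ) - 1) * (H * t ^ 2) := by rw [hKdef]; ring
    nlinarith [htail]
  by_cases hHz : H = 0
  · -- H = 0 case: K = 0, take t = l/4
    refine ⟨l / 4, ⟨by linarith, by linarith⟩, ?_⟩
    have h := key (l / 4) (by linarith) (by linarith)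
    have : K = 0 := by rw [hKdef, hHz]; ring
    rw [this] at h
    nlinarith
  · have hKpos : 0 < K := by
      rcases lt_or_eq_of_le hH with h | h
      · exact mul_pos h (by linarith)
      · exact absurd h.symm hHz
    obtain ⟨A, hAdef⟩ : ∃ A : ℝ, A = -(a 0) := ⟨_, rfl⟩
    have hA : 0 ≤ A := by rw [hAdef]; linarith
    have hA1 : A < G * l / 4 := by rw [hAdef]; linarith
    have hA2 : 4 * K * A < G ^ 2 := by
      have h := ha0_gt₂ hHz
      have heq : 4 * H * ((d:ℝ) - 1) = 4 * K := by rw [hKdef]; ring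
      rw [heq] at h
      have hA' : A < G ^ 2 / (4 * K) := by rw [hAdef]; linarith
      have := (lt_div_iff₀ (by linarith : (0:ℝ) < 4 * K)).mp hA'
      linarith
    obtain ⟨t0, ht0def⟩ : ∃ t0 : ℝ, t0 = 2 * A / G := ⟨_, rfl⟩
    have hGt0 : G * t0 = 2 * A := by
      rw [ht0def]; field_simp
    have ht0nn : 0 ≤ t0 := by
      rw [ht0def]; positivity
    have ht0l : t0 < l / 2 := by
      rw [ht0def, div_lt_iff₀ hG]
      linarith
    have h2Kt0 : 2 * K * t0 < G := by
      rw [ht0def, show 2 * K * (2 * A / G) = 4 * K * A / G by ring, div_lt_iff₀ hG]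
      nlinarith
    obtain ⟨ε, hεdef⟩ : ∃ ε : ℝ,
        ε = min ((l / 2 - t0) / 2) ((G - 2 * K * t0) / (2 * K)) := ⟨_, rfl⟩
    have hε : 0 < ε := by
      rw [hεdef]
      apply lt_min
      · linarith
      · apply div_pos (by linarith) (by linarith)
    have hεl : ε ≤ (l / 2 - t0) / 2 := hεdef ▸ min_le_left _ _
    have hεK : K * ε ≤ (G - 2 * K * t0) / 2 := by
      have h : ε ≤ (G - 2 * K * t0) / (2 * K) := hεdef ▸ min_le_right _ _
      have : ε * (2 * K) ≤ G - 2 * K * t0 := by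
        rw [← le_div_iff₀ (by linarith : (0:ℝ) < 2 * K)]
        exact h
      linarith
    have htpos : 0 < t0 + ε := by linarith
    have htl : t0 + ε < l / 2 := by linarith
    have ht1 : t0 + ε ≤ 1 := by linarith
    refine ⟨t0 + ε, ⟨htpos, htl⟩, ?_⟩
    have h := key (t0 + ε) htpos ht1
    have f1 : K * t0 ^ 2 ≤ A := by
      have h' := mul_le_mul_of_nonneg_right hA2.le hA
      rw [ht0def, div_pow, ← mul_div_assoc, div_le_iff₀ (by positivity : (0:ℝ) < G ^ 2)]
      nlinarith
    have f2 : K * (2 * t0 + ε) ≤ G - K * ε := by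
      have e0 : K * (2 * t0 + ε) = 2 * K * t0 + K * ε := by ring
      linarith [hεK, e0]
    have f3 := mul_le_mul_of_nonneg_right f2 hε.le
    have e1 : K * (t0 + ε) ^ 2 = K * t0 ^ 2 + K * (2 * t0 + ε) * ε := by ring
    have e2 : G * (t0 + ε) = G * t0 + G * ε := by ring
    have e3 : (G - K * ε) * ε = G * ε - K * (ε * ε) := by ring
    have hKε2 : 0 < K * (ε * ε) := mul_pos hKpos (mul_pos hε hε)
    have ha0A : a 0 = -A := by rw [hAdef]; ring
    have goal : 0 < a 0 + G * (t0 + ε) - K * (t0 + ε) ^ 2 := by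
      rw [ha0A]
      linarith [f1, f3, e1, e2, e3, hKε2, hGt0]
    linarith
end

section
/- Let $f\colon X\to T$ be a flat morphism of Noetherian schemes, where $T$ is integral and satisfies Serre's condition $S_1$. If the fiber of $f$ over the generic point of $T$ is reduced, then $X$ is reduced. -/
open AlgebraicGeometry CategoryTheory CategoryTheory.Limits

open scoped TensorProduct

section Aux

open IsLocalRing TopCat

/-- The stalk of an integral scheme at any point is a domain. -/
lemma stalk_isDomain_of_isIntegral (T : Scheme) [IsIntegral T] (t : T) :
    IsDomain (T.presheaf.stalk t) := by
  have h : genericPoint T ⤳ t := genericPoint_specializes t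
  have hinj : Function.Injective (T.presheaf.stalkSpecializes h) := by
    rw [injective_iff_map_eq_zero]
    intro ξ hξ
    obtain ⟨U, m, s, rfl⟩ := TopCat.Presheaf.germ_exist _ ξ
    have hη : genericPoint T ∈ U := h.mem_open U.2 m
    rw [TopCat.Presheaf.germ_stalkSpecializes_apply] at hξ
    have hs : s = 0 := germ_injective_of_isIntegral T (genericPoint T) hη (by simpa using hξ)
    rw [hs, map_zero]
  haveI : IsDomain ↑(T.presheaf.stalk (genericPoint T)) :=
    inferInstanceAs (IsDomain ↑T.functionField)
  exact Function.Injective.isDomain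
    (T.presheaf.stalkSpecializes h).hom hinj

/-- The residue map at the generic point of an integral scheme is an isomorphism. -/
lemma isIso_residue_genericPoint (T : Scheme) [IsIntegral T] :
    IsIso (T.residue (genericPoint T)) := by
  have hfield : IsField ↑(T.presheaf.stalk (genericPoint T)) :=
    @Field.toIsField (T.presheaf.stalk (genericPoint T)) (inferInstanceAs (Field T.functionField))
  have hmax : IsLocalRing.maximalIdeal ↑(T.presheaf.stalk (genericPoint T)) = ⊥ :=
    IsLocalRing.isField_iff_maximalIdeal_eq.mp hfield
  have hinj : Function.Injective
      (IsLocalRing.residue ↑(T.presheaf.stalk (genericPoint T))) := by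
    rw [RingHom.injective_iff_ker_eq_bot, IsLocalRing.ker_residue, hmax]
  rw [ConcreteCategory.isIso_iff_bijective]
  exact ⟨hinj, T.residue_surjective _⟩

/-- If the fiber of `f` over `f y` is reduced and the residue map at `f y` is an isomorphism
(e.g. at the generic point of an integral scheme), then the stalk at `y` is reduced. -/
lemma stalk_reduced_aux {X T : Scheme} (f : X ⟶ T) (y : X)
    [IsIso (T.residue (f.base y))]
    (hred : IsReduced (pullback f (T.fromSpecResidueField (f.base y)))) :
    _root_.IsReduced (X.presheaf.stalk y) := by
  haveI := hred
  let χ : T.residueField (f.base y) ⟶ X.presheaf.stalk y :=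
    inv (T.residue (f.base y)) ≫ f.stalkMap y
  have w : X.fromSpecStalk y ≫ f = Spec.map χ ≫ T.fromSpecResidueField (f.base y) := by
    rw [Scheme.fromSpecResidueField, ← Spec.map_comp_assoc]
    have hcomp : T.residue (f.base y) ≫ χ = f.stalkMap y := by
      simp [χ]
    rw [hcomp, Scheme.SpecMap_stalkMap_fromSpecStalk]
  let ψ : Spec (X.presheaf.stalk y) ⟶ pullback f (T.fromSpecResidueField (f.base y)) :=
    pullback.lift (X.fromSpecStalk y) (Spec.map χ) w
  have hψfst : ψ ≫ pullback.fst f (T.fromSpecResidueField (f.base y)) = X.fromSpecStalk y :=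
    pullback.lift_fst _ _ _
  have h0 := Scheme.stalkClosedPointTo_comp ψ (pullback.fst f (T.fromSpecResidueField (f.base y)))
  have hinj2 : Function.Injective
      (Scheme.stalkClosedPointTo (ψ ≫ pullback.fst f (T.fromSpecResidueField (f.base y)))) := by
    rw [hψfst, Scheme.stalkClosedPointTo_fromSpecStalk]
    exact (X.presheaf.stalkCongr _).commRingCatIsoToRingEquiv.injective
  rw [h0] at hinj2
  have hinj : Function.Injective
      ((pullback.fst f (T.fromSpecResidueField (f.base y))).stalkMap
        (ψ.base (IsLocalRing.closedPoint _))) := by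
    intro u v huv
    apply hinj2
    show (Scheme.stalkClosedPointTo ψ)
        (((pullback.fst f (T.fromSpecResidueField (f.base y))).stalkMap
          (ψ.base (IsLocalRing.closedPoint _))) u) =
      (Scheme.stalkClosedPointTo ψ)
        (((pullback.fst f (T.fromSpecResidueField (f.base y))).stalkMap
          (ψ.base (IsLocalRing.closedPoint _))) v)
    rw [huv]
  have hres := isReduced_of_injective
    ((pullback.fst f (T.fromSpecResidueField (f.base y))).stalkMap
      (ψ.base (IsLocalRing.closedPoint _))).hom hinj
  have hz : (pullback.fst f (T.fromSpecResidueField (f.base y))).base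
      (ψ.base (IsLocalRing.closedPoint _)) = y := by
    have hc := Scheme.Hom.comp_apply ψ (pullback.fst f (T.fromSpecResidueField (f.base y)))
      (IsLocalRing.closedPoint _)
    rw [hψfst, Scheme.fromSpecStalk_closedPoint] at hc
    exact hc.symm
  rwa [hz] at hres

end Aux

/-- Let `f : X ⟶ T` be a flat morphism of Noetherian schemes, where `T` is integral and
satisfies Serre's condition `S₁` (every associated prime of each local ring is minimal).
If the fiber of `f` over the generic point of `T` is reduced, then `X` is reduced. -/
theorem reduced_of_flat_with_reduced_generic_fiber
    (X T : Scheme) [AlgebraicGeometry.IsNoetherian X] [AlgebraicGeometry.IsNoetherian T]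
    [IsIntegral T] (f : X ⟶ T)
    (hflat : ∀ x : X, letI := (f.stalkMap x).hom.toAlgebra;
      Module.Flat (T.presheaf.stalk (f.base x)) (X.presheaf.stalk x))
    (hS1 : ∀ t : T, ∀ p ∈ associatedPrimes (T.presheaf.stalk t) (T.presheaf.stalk t),
      p ∈ minimalPrimes (T.presheaf.stalk t))
    (hgen : IsReduced (pullback f (T.fromSpecResidueField (genericPoint T)))) :
    IsReduced X := by
  classical
  haveI : ∀ x : X, _root_.IsReduced (X.presheaf.stalk x) := by
    intro x
    letI := (f.stalkMap x).hom.toAlgebra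
    haveI hfl : Module.Flat (T.presheaf.stalk (f.base x)) (X.presheaf.stalk x) := hflat x
    haveI hdom : IsDomain ↑(T.presheaf.stalk (f.base x)) :=
      stalk_isDomain_of_isIntegral T (f.base x)
    constructor
    intro a ha
    by_contra ha0
    -- flatness over a domain: nonzero scalars act regularly on the stalk `A` at `x`
    have hreg : ∀ r : ↑(T.presheaf.stalk (f.base x)), r ≠ 0 →
        IsSMulRegular ↑(X.presheaf.stalk x) r := by
      intro r hr
      have hRreg : IsSMulRegular ↑(T.presheaf.stalk (f.base x)) r := by
        intro b c hbc
        simp only [smul_eq_mul] at hbc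
        exact mul_left_cancel₀ hr hbc
      have htensor : IsSMulRegular
          (↑(X.presheaf.stalk x) ⊗[↑(T.presheaf.stalk (f.base x))]
            ↑(T.presheaf.stalk (f.base x))) r :=
        hRreg.lTensor (M := ↑(X.presheaf.stalk x))
      intro b c hbc
      simp only at hbc
      apply (TensorProduct.rid ↑(T.presheaf.stalk (f.base x))
        ↑(X.presheaf.stalk x)).symm.injective
      apply htensor
      show r • (TensorProduct.rid _ _).symm b = r • (TensorProduct.rid _ _).symm c
      rw [← map_smul, ← map_smul, hbc]
    -- the multiplicative set of images of nonzero elements of the stalk at `f x`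
    let M : Submonoid ↑(X.presheaf.stalk x) :=
      { carrier := {b | ∃ r : ↑(T.presheaf.stalk (f.base x)), r ≠ 0 ∧ (f.stalkMap x) r = b}
        one_mem' := ⟨1, one_ne_zero, map_one _⟩
        mul_mem' := by
          rintro b₁ b₂ ⟨r₁, hr₁, rfl⟩ ⟨r₂, hr₂, rfl⟩
          exact ⟨r₁ * r₂, mul_ne_zero hr₁ hr₂, map_mul _ _ _⟩ }
    -- the annihilator of `a` is disjoint from `M`
    have hdisj : Disjoint ((Ideal.torsionOf _ _ a : Ideal ↑(X.presheaf.stalk x)) :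
        Set ↑(X.presheaf.stalk x)) (M : Set ↑(X.presheaf.stalk x)) := by
      rw [Set.disjoint_left]
      rintro b hb ⟨r, hr, rfl⟩
      have hba : (f.stalkMap x) r * a = 0 := by
        have := (Ideal.mem_torsionOf_iff a ((f.stalkMap x) r)).mp hb
        rwa [smul_eq_mul] at this
      have hsmul : r • a = 0 := by
        rw [Algebra.smul_def]
        exact hba
      have := hreg r hr (show r • a = r • (0 : ↑(X.presheaf.stalk x)) by
        rw [hsmul, smul_zero])
      exact ha0 this
    obtain ⟨q, hqprime, hIq, hqdisj⟩ :=
      Ideal.exists_le_prime_disjoint (Ideal.torsionOf _ _ a) M hdisj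
    haveI := hqprime
    let qpt : Spec (X.presheaf.stalk x) := (⟨q, hqprime⟩ : PrimeSpectrum _)
    -- the point of `X` under `qpt`
    let F := X.fromSpecStalk x
    let G := (Spec (X.presheaf.stalk x)).fromSpecStalk qpt ≫ F
    have hGq : G.base (IsLocalRing.closedPoint _) = F.base qpt := by
      show F.base (((Spec (X.presheaf.stalk x)).fromSpecStalk qpt).base
        (IsLocalRing.closedPoint _)) = F.base qpt
      rw [Scheme.fromSpecStalk_closedPoint]
    -- the point lies over the generic point of `T`
    have hcomap : PrimeSpectrum.comap (f.stalkMap x).hom qpt = ⟨⊥, Ideal.bot_prime⟩ := by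
      apply PrimeSpectrum.ext
      rw [Submodule.eq_bot_iff]
      intro r hr
      by_contra hr0
      have hrM : (f.stalkMap x) r ∈ M := ⟨r, hr0, rfl⟩
      exact Set.disjoint_left.mp hqdisj hr hrM
    have hfb : f.base (G.base (IsLocalRing.closedPoint _)) = genericPoint T := by
      rw [hGq]
      have h1 : f.base (F.base qpt) = (T.fromSpecStalk (f.base x)).base
          (PrimeSpectrum.comap (f.stalkMap x).hom qpt) := by
        rw [← Scheme.Hom.comp_apply, ← Scheme.SpecMap_stalkMap_fromSpecStalk,
          Scheme.Hom.comp_apply, Spec.map_apply]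
      rw [h1, hcomap]
      -- the image of `⊥` is the generic point
      have hg1 : genericPoint T ⤳ (T.fromSpecStalk (f.base x)).base ⟨⊥, Ideal.bot_prime⟩ :=
        genericPoint_specializes _
      obtain ⟨w, hw⟩ : genericPoint T ∈ Set.range (T.fromSpecStalk (f.base x)).base := by
        rw [Scheme.range_fromSpecStalk]
        exact genericPoint_specializes (f.base x)
      have hg2 : (T.fromSpecStalk (f.base x)).base ⟨⊥, Ideal.bot_prime⟩ ⤳ genericPoint T := by
        rw [← hw]
        exact ((PrimeSpectrum.le_iff_specializes ⟨⊥, Ideal.bot_prime⟩ w).mp bot_le).map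
          (T.fromSpecStalk (f.base x)).base.hom.2
      exact (hg2.antisymm hg1).eq
    -- the stalk at that point is reduced, by the hypothesis on the generic fiber
    haveI hresiso : IsIso (T.residue (f.base (G.base (IsLocalRing.closedPoint _)))) := by
      rw [hfb]
      exact isIso_residue_genericPoint T
    have hredP : IsReduced (pullback f (T.fromSpecResidueField (f.base (G.base
        (IsLocalRing.closedPoint _))))) := by
      rw [hfb]; exact hgen
    haveI hstalkred : _root_.IsReduced
        (X.presheaf.stalk (G.base (IsLocalRing.closedPoint _))) :=
      stalk_reduced_aux f _ hredP
    -- transport the nilpotent `a` into that stalk and derive a contradiction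
    have hyx : G.base (IsLocalRing.closedPoint _) ⤳ x := by
      rw [hGq]
      have h2 : F.base qpt ⤳ F.base (IsLocalRing.closedPoint _) :=
        (IsLocalRing.specializes_closedPoint qpt).map F.base.hom.2
      rwa [Scheme.fromSpecStalk_closedPoint] at h2
    have key : X.presheaf.stalkSpecializes hyx ≫ Scheme.stalkClosedPointTo G =
        StructureSheaf.toStalk ↑(X.presheaf.stalk x) qpt := by
      apply Spec.map_injective
      rw [← cancel_mono (X.fromSpecStalk x)]
      rw [Spec.map_comp, Category.assoc, Scheme.SpecMap_stalkSpecializes_fromSpecStalk,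
        Scheme.Spec_stalkClosedPointTo_fromSpecStalk]
      exact congrArg (· ≫ X.fromSpecStalk x) (Spec.fromSpecStalk_eq' _ qpt)
    have hπσ : Scheme.stalkClosedPointTo G ((X.presheaf.stalkSpecializes hyx) a) =
        StructureSheaf.toStalk ↑(X.presheaf.stalk x) qpt a := by
      have hc : ⇑(X.presheaf.stalkSpecializes hyx ≫ Scheme.stalkClosedPointTo G) =
          ⇑(Scheme.stalkClosedPointTo G) ∘ ⇑(X.presheaf.stalkSpecializes hyx) := rfl
      have := congrArg
        (fun φ : X.presheaf.stalk x ⟶ (Spec (X.presheaf.stalk x)).presheaf.stalk qpt => φ a) key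
      exact this
    have htoStalk : StructureSheaf.toStalk ↑(X.presheaf.stalk x) qpt a ≠ 0 := by
      intro h0
      rw [← StructureSheaf.stalkAlgebra_map] at h0
      haveI := StructureSheaf.IsLocalization.to_stalk ↑(X.presheaf.stalk x) qpt
      obtain ⟨m, hm⟩ := (IsLocalization.map_eq_zero_iff qpt.asIdeal.primeCompl
        ((Spec.structureSheaf ↑(X.presheaf.stalk x)).presheaf.stalk qpt) a).mp h0
      have hmI : (m : ↑(X.presheaf.stalk x)) ∈ Ideal.torsionOf _ _ a := by
        rw [Ideal.mem_torsionOf_iff, smul_eq_mul]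
        exact hm
      exact m.2 (hIq hmI)
    have hσa0 : (X.presheaf.stalkSpecializes hyx) a ≠ 0 := fun h => htoStalk (by
      rw [← hπσ, h, map_zero]; rfl)
    have hσanil : IsNilpotent ((X.presheaf.stalkSpecializes hyx) a) :=
      IsNilpotent.map ha (X.presheaf.stalkSpecializes hyx).hom
    exact hσa0 hσanil.eq_zero
  exact @isReduced_of_isReduced_stalk X (by assumption)
end
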